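/- Let c_1,…,c_n be reals and let d_1,…,d_n be reals with d_1 = d_n = 1 and d_i ≠ 0 for all i. Then D·F·D = D·C − C·D, i.e. D·F·D equals the commutator [D, C]. -/

import Mathlib

open Finset Matrix
/-- The matrix `D` with entries `d_{ij}`: `0` for `i < j`, `d_i` for `i = j`, and
`-d_j · (∏_{k=j+1}^{i-1} (1 - d_k)) · d_i` for `i > j`. -/
def Dmat (n : ℕ) (d : Fin n → ℝ) : Matrix (Fin n) (Fin n) ℝ :=
  Matrix.of fun i j =>
    if i < j then 0
    else if i = j then d i
    else -(d j) * (∏ k ∈ Finset.Ioo j i, (1 - d k)) * d i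

/-- The matrix `F` with `F_{ij} = c_i - c_j` for `i > j` and `0` otherwise. -/
def Fmat (n : ℕ) (c : Fin n → ℝ) : Matrix (Fin n) (Fin n) ℝ :=
  Matrix.of fun i j => if j < i then c i - c j else 0

/-- Candidate inverse of `Dmat`. -/
noncomputable def Emat (n : ℕ) (d : Fin n → ℝ) : Matrix (Fin n) (Fin n) ℝ :=
  Matrix.of fun i j =>
    if j < i then 1
    else if i = j then (d i)⁻¹
    else 0

lemma tele {n : ℕ} (f : Fin n → ℝ) :
    ∀ (m : ℕ) (j i : Fin n), j < i → i.val - j.val = m →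
    ∑ k ∈ Finset.Ioo j i, f k * ∏ l ∈ Finset.Ioo k i, (1 - f l)
      = 1 - ∏ l ∈ Finset.Ioo j i, (1 - f l) := by
  intro m
  induction m using Nat.strong_induction_on with
  | _ m ih =>
    intro j i hji hm
    by_cases h : j.val + 1 = i.val
    · have he : Finset.Ioo j i = ∅ := by
        ext k
        simp only [Finset.mem_Ioo, Fin.lt_def, Finset.notMem_empty, iff_false,
          not_and]
        omega
      simp [he]
    · have hji' : j.val + 1 < i.val := by
        have := Fin.lt_def.mp hji; omega
      have hin : i.val < n := i.isLt
      have hins : Finset.Ioo j i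
          = insert (⟨j.val + 1, by omega⟩ : Fin n) (Finset.Ioo ⟨j.val + 1, by omega⟩ i) := by
        ext k
        simp only [Finset.mem_Ioo, Finset.mem_insert, Fin.lt_def, Fin.ext_iff]
        omega
      have hnot : (⟨j.val + 1, by omega⟩ : Fin n)
          ∉ Finset.Ioo (⟨j.val + 1, by omega⟩ : Fin n) i := by
        simp
      have hIH := ih (i.val - (j.val + 1)) (by omega) ⟨j.val + 1, by omega⟩ i
        (by simp only [Fin.lt_def]; omega) rfl
      rw [hins, Finset.sum_insert hnot, Finset.prod_insert hnot, hIH]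
      ring

lemma DE {n : ℕ} (d : Fin n → ℝ) (hd : ∀ i : Fin n, d i ≠ 0) :
    Dmat n d * Emat n d = 1 := by
  ext i j
  rw [Matrix.mul_apply]
  rcases lt_trichotomy i j with h | h | h
  · rw [Matrix.one_apply_ne (ne_of_lt h)]
    apply Finset.sum_eq_zero
    intro k _
    simp only [Dmat, Emat, Matrix.of_apply]
    split_ifs <;>
      first
        | ring1
        | (exfalso; simp only [Fin.lt_def, Fin.ext_iff] at *; all_goals omega)
  · subst h
    rw [Matrix.one_apply_eq]
    rw [Finset.sum_eq_single i]
    · simp only [Dmat, Emat, Matrix.of_apply]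
      simp [hd i]
    · intro k _ hk
      simp only [Dmat, Emat, Matrix.of_apply]
      split_ifs <;>
        first
          | ring1
          | (exfalso; simp only [Fin.lt_def, Fin.ext_iff] at *; all_goals omega)
    · simp
  · rw [Matrix.one_apply_ne (ne_of_gt h)]
    have hIcc : (Finset.univ : Finset (Fin n)) ⊇ Finset.Icc j i := Finset.subset_univ _
    have hzero : ∀ k ∈ (Finset.univ : Finset (Fin n)), k ∉ Finset.Icc j i →
        Dmat n d i k * Emat n d k j = 0 := by
      intro k _ hk
      simp only [Finset.mem_Icc, not_and_or, not_le, Fin.lt_def, Fin.le_def] at hk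
      simp only [Dmat, Emat, Matrix.of_apply]
      split_ifs <;>
        first
          | ring1
          | (exfalso; simp only [Fin.lt_def, Fin.ext_iff] at *; all_goals omega)
    rw [← Finset.sum_subset hIcc hzero]
    have hsplit : Finset.Icc j i = insert j (insert i (Finset.Ioo j i)) := by
      ext k
      simp only [Finset.mem_Icc, Finset.mem_insert, Finset.mem_Ioo, Fin.lt_def,
        Fin.le_def, Fin.ext_iff]
      omega
    have hj_not : j ∉ insert i (Finset.Ioo j i) := by
      simp only [Finset.mem_insert, Finset.mem_Ioo, Fin.lt_def, Fin.ext_iff,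
        not_or, not_and]
      have := Fin.lt_def.mp h
      constructor
      · omega
      · intro hh; omega
    have hi_not : i ∉ Finset.Ioo j i := by simp
    rw [hsplit, Finset.sum_insert hj_not, Finset.sum_insert hi_not]
    have hji : ¬ (i < j) := not_lt_of_gt h
    have hij : i ≠ j := ne_of_gt h
    have hterm1 : Dmat n d i j * Emat n d j j =
        -(∏ k ∈ Finset.Ioo j i, (1 - d k)) * d i := by
      simp only [Dmat, Emat, Matrix.of_apply, if_neg hji, if_neg hij,
        if_neg (lt_irrefl j), if_pos rfl, if_true]
      field_simp [hd j]
    have hterm2 : Dmat n d i i * Emat n d i j = d i := by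
      simp only [Dmat, Emat, Matrix.of_apply, if_neg (lt_irrefl i), if_pos rfl,
        if_pos h, if_true]
      ring
    have hterm3 : ∑ k ∈ Finset.Ioo j i, Dmat n d i k * Emat n d k j =
        -(d i) * (1 - ∏ l ∈ Finset.Ioo j i, (1 - d l)) := by
      have hc : ∀ k ∈ Finset.Ioo j i, Dmat n d i k * Emat n d k j =
          -(d i) * (d k * ∏ l ∈ Finset.Ioo k i, (1 - d l)) := by
        intro k hk
        simp only [Finset.mem_Ioo] at hk
        simp only [Dmat, Emat, Matrix.of_apply, if_neg (not_lt_of_gt hk.2),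
          if_neg (ne_of_gt hk.2), if_pos hk.1]
        ring
      rw [Finset.sum_congr rfl hc, ← Finset.mul_sum]
      congr 1
      exact tele d (i.val - j.val) j i h rfl
    rw [hterm1, hterm2, hterm3]
    ring

lemma Feq {n : ℕ} (c d : Fin n → ℝ) :
    Fmat n c = Matrix.diagonal c * Emat n d - Emat n d * Matrix.diagonal c := by
  ext i j
  simp only [Matrix.sub_apply, Matrix.diagonal_mul, Matrix.mul_diagonal, Fmat,
    Emat, Matrix.of_apply]
  split_ifs with h1 h2
  · ring
  · subst h2; ring
  · ring

theorem stmt_8 (n : ℕ) (hn : 2 ≤ n) (c d : Fin n → ℝ)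
    (hd1 : d ⟨0, by omega⟩ = 1) (hdn : d ⟨n - 1, by omega⟩ = 1)
    (hd : ∀ i : Fin n, d i ≠ 0) :
    Dmat n d * Fmat n c * Dmat n d =
      Dmat n d * Matrix.diagonal c - Matrix.diagonal c * Dmat n d := by
  have hDE := DE d hd
  have hED : Emat n d * Dmat n d = 1 := mul_eq_one_comm.mp hDE
  rw [Feq c d, Matrix.mul_sub, Matrix.sub_mul]
  simp only [← Matrix.mul_assoc]
  rw [Matrix.mul_assoc (Dmat n d * Matrix.diagonal c) (Emat n d) (Dmat n d),
    hED, Matrix.mul_one, hDE, Matrix.one_mul]
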